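/- Let B_{1,ℝ} and B_{2,ℝ} be two real Banach spaces carrying cones 𝒞_{1,ℝ}, 𝒞_{2,ℝ} from the real/complex cone setup, with the constant κ for the second space. Let A : B_{1,ℝ} → B_{2,ℝ} be a bounded linear operator with A(𝒞_{1,ℝ}) ⊂ 𝒞_{2,ℝ} whose image has finite diameter Δ_ℝ in the Hilbert projective metric d_H of 𝒞_{2,ℝ}. Then the complex-linear extension of A to the complexifications maps 𝒞_{1,ℂ} into 𝒞_{2,ℂ}, and the δ_{𝒞_{2,ℂ}}-diameter of A(𝒞_{1,ℂ}) satisfies Δ_ℂ ≤ 8Δ_ℝ + 2 ln(3√2 κ^{−2}). -/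

import Mathlib

open Complex Set ENNReal

namespace ConeSetup

variable {B : Type*} [NormedAddCommGroup B] [NormedSpace ℝ B]

/-- Complex scalar multiplication on the complexification `B × B`:
`(a+ib)(x,y) = (ax − by, ay + bx)`. -/
def cSmul (z : ℂ) (p : B × B) : B × B :=
  (z.re • p.1 - z.im • p.2, z.re • p.2 + z.im • p.1)

/-- The "real" norm `‖(x,y)‖_r = √(‖x‖² + ‖y‖²)` on the complexification. -/
noncomputable def rNorm (p : B × B) : ℝ :=
  Real.sqrt (‖p.1‖ ^ 2 + ‖p.2‖ ^ 2)

/-- The complexification norm `‖(x,y)‖ = sup_{θ∈[0,2π]} ‖e^{iθ}(x,y)‖_r`. -/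
noncomputable def cNorm (p : B × B) : ℝ :=
  sSup ((fun θ : ℝ => rNorm (cSmul (Complex.exp (θ * Complex.I)) p)) ''
    Set.Icc 0 (2 * Real.pi))

/-- The real cone `𝒞_ℝ = {h ≠ 0 : ℓ(h) ≥ 0 for all ℓ ∈ S}`. -/
def realCone (S : Set (B →L[ℝ] ℝ)) : Set B :=
  {h | h ≠ 0 ∧ ∀ ℓ ∈ S, 0 ≤ ℓ h}

/-- The complex cone `𝒞_ℂ = ℂ_* ⋅ (𝒞_ℝ + i 𝒞_ℝ)`. -/
def complexCone (S : Set (B →L[ℝ] ℝ)) : Set (B × B) :=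
  {p | ∃ z : ℂ, z ≠ 0 ∧ ∃ x ∈ realCone S, ∃ y ∈ realCone S, p = cSmul z (x, y)}

/-- A map `B × B → ℂ` is a (continuous) complex-linear functional for the complex
structure `cSmul`. -/
def IsCLinearFunctional (ℓ : B × B → ℂ) : Prop :=
  (∀ p q : B × B, ℓ (p + q) = ℓ p + ℓ q) ∧
  (∀ (z : ℂ) (p : B × B), ℓ (cSmul z p) = z * ℓ p) ∧
  Continuous ℓ

/-- The dual real cone `𝒞'_ℝ = {ℓ ∈ B'_ℝ : ℓ(h) ≥ 0 for all h ∈ 𝒞_ℝ}`. -/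
def dualRealCone (S : Set (B →L[ℝ] ℝ)) : Set (B →L[ℝ] ℝ) :=
  {ℓ | ∀ h ∈ realCone S, 0 ≤ ℓ h}

/-- The dual complex cone `𝒞'_ℂ = {ℓ ∈ B'_ℂ : ℓ(h) ≠ 0 for all h ∈ 𝒞_ℂ}`. -/
def dualComplexCone (S : Set (B →L[ℝ] ℝ)) : Set (B × B → ℂ) :=
  {ℓ | IsCLinearFunctional ℓ ∧ ∀ h ∈ complexCone S, ℓ h ≠ 0}

/-- The action of a real functional on the complexification: `ℓ(x+iy) = ℓ(x) + iℓ(y)`. -/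
noncomputable def cext (ℓ : B →L[ℝ] ℝ) (p : B × B) : ℂ :=
  (ℓ p.1 : ℂ) + (ℓ p.2 : ℂ) * Complex.I

/-- `𝒞̊'_ℝ = {ℓ ∈ 𝒞'_ℝ : ℓ(x) > 0 for all x ∈ 𝒞_ℝ}`. -/
def interiorDualRealCone (S : Set (B →L[ℝ] ℝ)) : Set (B →L[ℝ] ℝ) :=
  {ℓ | ℓ ∈ dualRealCone S ∧ ∀ x ∈ realCone S, 0 < ℓ x}

/-- `Ĉ'_ℂ = {±ℓ ± ip : ℓ, p ∈ 𝒞̊'_ℝ}`. -/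
def hatDualComplexCone (S : Set (B →L[ℝ] ℝ)) : Set (B × B → ℂ) :=
  {q | ∃ ℓ ∈ interiorDualRealCone S, ∃ p ∈ interiorDualRealCone S,
    ∃ ε₁ ∈ ({1, -1} : Set ℝ), ∃ ε₂ ∈ ({1, -1} : Set ℝ),
      q = fun v => (ε₁ : ℂ) * cext ℓ v + (ε₂ : ℂ) * Complex.I * cext p v}

/-- `E_𝒞(h,g) = {ℓ(h)/ℓ(g) : ℓ ∈ 𝒞'_ℂ}`. -/
def gaugeSet (S : Set (B →L[ℝ] ℝ)) (h g : B × B) : Set ℂ :=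
  {z | ∃ ℓ ∈ dualComplexCone S, z = ℓ h / ℓ g}

/-- The projective gauge
`δ_𝒞(h,g) = ln( sup_{z∈E_𝒞(h,g)} |z| / inf_{z∈E_𝒞(h,g)} |z| ) = sup_{z,w∈E_𝒞(h,g)} ln|z/w|`,
valued in `[0,∞]`. -/
noncomputable def deltaGauge (S : Set (B →L[ℝ] ℝ)) (h g : B × B) : ℝ≥0∞ :=
  ⨆ z ∈ gaugeSet S h g, ⨆ w ∈ gaugeSet S h g, ENNReal.ofReal (Real.log (‖z‖ / ‖w‖))

/-- The real/complex cone setup: a separating family `S` of functionals, an order unit `𝕖`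
whose cone norm is the norm of `B`, and a functional `𝕞` in the weak-* closed convex hull
of `ℝ₊ ⋅ S` dominating the norm on the cone. -/
structure Setup (B : Type*) [NormedAddCommGroup B] [NormedSpace ℝ B] where
  S : Set (B →L[ℝ] ℝ)
  e : B
  mm : B →L[ℝ] ℝ
  κ : ℝ
  separating : ∀ x : B, (∀ ℓ ∈ S, ℓ x = 0) → x = 0
  e_mem : e ∈ realCone S
  arch : ∀ h : B, ∃ l : ℝ, 0 ≤ l ∧ ∀ ℓ ∈ S, 0 ≤ ℓ (l • e - h)
  norm_eq : ∀ h : B,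
    ‖h‖ = sInf {l : ℝ | 0 ≤ l ∧ ∀ ℓ ∈ S, 0 ≤ ℓ (l • e - h) ∧ 0 ≤ ℓ (l • e + h)}
  κ_pos : 0 < κ
  κ_lt_one : κ < 1
  mm_e : mm e = 1
  mm_lower : ∀ h ∈ realCone S, κ * ‖h‖ ≤ mm h
  mm_star : (⇑mm : B → ℝ) ∈ closure ((fun ℓ : B →L[ℝ] ℝ => (⇑ℓ : B → ℝ)) ''
    convexHull ℝ {q : B →L[ℝ] ℝ | ∃ c : ℝ, 0 ≤ c ∧ ∃ ℓ ∈ S, q = c • ℓ})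


section AuxiliaryLemmas

set_option linter.unusedSectionVars false
set_option linter.unusedVariables false
set_option maxHeartbeats 1000000

lemma smul_mem_realCone {S : Set (B →L[ℝ] ℝ)} {c : B} (hc : c ∈ realCone S) {a : ℝ}
    (ha : 0 < a) : a • c ∈ realCone S :=
  ⟨smul_ne_zero ha.ne' hc.1, fun ℓ hℓ => by
    rw [map_smul, smul_eq_mul]; exact mul_nonneg ha.le (hc.2 ℓ hℓ)⟩

lemma combo_mem_realCone {S : Set (B →L[ℝ] ℝ)}
    (hsep : ∀ x : B, (∀ ℓ ∈ S, ℓ x = 0) → x = 0)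
    {c c' : B} (hc : c ∈ realCone S) (hc' : c' ∈ realCone S) {a b : ℝ}
    (ha : 0 < a) (hb : 0 < b) : a • c + b • c' ∈ realCone S := by
  refine ⟨?_, fun ℓ hℓ => by
    rw [map_add, map_smul, map_smul, smul_eq_mul, smul_eq_mul]
    exact add_nonneg (mul_nonneg ha.le (hc.2 ℓ hℓ)) (mul_nonneg hb.le (hc'.2 ℓ hℓ))⟩
  intro h0
  apply hc.1
  apply hsep
  intro ℓ hℓ
  have h1 : a * ℓ c + b * ℓ c' = 0 := by
    have h2 := congrArg ℓ h0
    simpa [map_add, map_smul, smul_eq_mul] using h2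
  have h2 := hc.2 ℓ hℓ
  have h3 := hc'.2 ℓ hℓ
  have h4 : a * ℓ c = 0 := by nlinarith [mul_nonneg ha.le h2, mul_nonneg hb.le h3]
  exact (mul_eq_zero.mp h4).resolve_left ha.ne'

lemma pair_mem_complexCone {S : Set (B →L[ℝ] ℝ)} {w₁ w₂ : B}
    (h1 : w₁ ∈ realCone S) (h2 : w₂ ∈ realCone S) : (w₁, w₂) ∈ complexCone S :=
  ⟨1, one_ne_zero, w₁, h1, w₂, h2, by simp [cSmul]⟩

section ell

variable (ℓ : B × B → ℂ)

lemma lin_smul (hsm : ∀ (z : ℂ) (p : B × B), ℓ (cSmul z p) = z * ℓ p) (r : ℝ) (h : B) :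
    ℓ (r • h, 0) = (r : ℂ) * ℓ (h, 0) := by
  have e : (cSmul (r : ℂ) (h, 0) : B × B) = (r • h, 0) := by
    simp [cSmul]
  rw [← e, hsm]

lemma lin_add (hadd : ∀ p q : B × B, ℓ (p + q) = ℓ p + ℓ q) (a b : B) :
    ℓ (a + b, 0) = ℓ (a, 0) + ℓ (b, 0) := by
  have e : ((a, 0) : B × B) + (b, 0) = (a + b, 0) := by simp
  rw [← e, hadd]

lemma lin_sub (hadd : ∀ p q : B × B, ℓ (p + q) = ℓ p + ℓ q)
    (hsm : ∀ (z : ℂ) (p : B × B), ℓ (cSmul z p) = z * ℓ p) (z w : B) (α : ℝ) :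
    ℓ (z - α • w, 0) = ℓ (z, 0) - (α : ℂ) * ℓ (w, 0) := by
  have e : z - α • w = z + (-α) • w := by rw [neg_smul, ← sub_eq_add_neg]
  rw [e, lin_add ℓ hadd, lin_smul ℓ hsm]
  push_cast
  ring

lemma lin_sub' (hadd : ∀ p q : B × B, ℓ (p + q) = ℓ p + ℓ q)
    (hsm : ∀ (z : ℂ) (p : B × B), ℓ (cSmul z p) = z * ℓ p) (z w : B) (β : ℝ) :
    ℓ (β • w - z, 0) = (β : ℂ) * ℓ (w, 0) - ℓ (z, 0) := by
  have e : β • w - z = β • w + (-1 : ℝ) • z := by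
    rw [neg_smul, one_smul, ← sub_eq_add_neg]
  rw [e, lin_add ℓ hadd, lin_smul ℓ hsm, lin_smul ℓ hsm]
  push_cast
  ring

lemma pair_eq (hadd : ∀ p q : B × B, ℓ (p + q) = ℓ p + ℓ q)
    (hsm : ∀ (z : ℂ) (p : B × B), ℓ (cSmul z p) = z * ℓ p) (x y : B) :
    ℓ (x, y) = ℓ (x, 0) + Complex.I * ℓ (y, 0) := by
  have e1 : ((x, y) : B × B) = (x, 0) + cSmul Complex.I (y, 0) := by
    simp [cSmul]
  rw [e1, hadd, hsm]

variable {S : Set (B →L[ℝ] ℝ)}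

lemma ell_ne (hadd : ∀ p q : B × B, ℓ (p + q) = ℓ p + ℓ q)
    (hsm : ∀ (z : ℂ) (p : B × B), ℓ (cSmul z p) = z * ℓ p)
    (hnv : ∀ h ∈ complexCone S, ℓ h ≠ 0)
    {c : B} (hc : c ∈ realCone S) : ℓ (c, 0) ≠ 0 := by
  intro h0
  apply hnv (c, c) (pair_mem_complexCone hc hc)
  rw [pair_eq ℓ hadd hsm, h0, mul_zero, add_zero]

lemma claim1 (hadd : ∀ p q : B × B, ℓ (p + q) = ℓ p + ℓ q)
    (hsm : ∀ (z : ℂ) (p : B × B), ℓ (cSmul z p) = z * ℓ p)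
    (hnv : ∀ h ∈ complexCone S, ℓ h ≠ 0)
    (hsep : ∀ x : B, (∀ ℓ ∈ S, ℓ x = 0) → x = 0)
    {c c' : B} (hc : c ∈ realCone S ∨ c = 0) (hc' : c' ∈ realCone S ∨ c' = 0) :
    0 ≤ ((starRingEnd ℂ) (ℓ (c, 0)) * ℓ (c', 0)).re := by
  have hzero : ℓ ((0 : B), (0 : B)) = 0 := by
    have := lin_smul ℓ hsm 0 0
    simpa using this
  rcases hc with hc | rfl
  · rcases hc' with hc' | rfl
    · by_contra hneg
      push_neg at hneg
      set α := ℓ (c, 0) with hα_def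
      set β := ℓ (c', 0) with hβ_def
      have hα : α ≠ 0 := ell_ne ℓ hadd hsm hnv hc
      set γ := (starRingEnd ℂ) α * β with hγ_def
      set s := γ.im with hs_def
      have ha : 0 < -γ.re := by linarith
      have hb : 0 < Complex.normSq α := Complex.normSq_pos.mpr hα
      have hw₀mem : (-γ.re) • c + Complex.normSq α • c' ∈ realCone S :=
        combo_mem_realCone hsep hc hc' ha hb
      have hLw₀ : ℓ ((-γ.re) • c + Complex.normSq α • c', 0) = Complex.I * (s : ℂ) * α := by
        rw [lin_add ℓ hadd, lin_smul ℓ hsm, lin_smul ℓ hsm]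
        have hconj : (starRingEnd ℂ) α ≠ 0 := by
          simpa using hα
        apply mul_left_cancel₀ hconj
        have hns : (starRingEnd ℂ) α * α = (Complex.normSq α : ℂ) :=
          (Complex.normSq_eq_conj_mul_self (z := α)).symm
        have hre : (γ.re : ℂ) + (γ.im : ℂ) * Complex.I = γ := Complex.re_add_im γ
        push_cast
        linear_combination (-(γ.re : ℂ) - Complex.I * (γ.im : ℂ)) * hns -
          (Complex.normSq α : ℂ) * hre - (Complex.normSq α : ℂ) * hγ_def
      rcases lt_trichotomy s 0 with hs | hs | hs
      · apply hnv ((-γ.re) • c + Complex.normSq α • c', (-s) • c)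
          (pair_mem_complexCone hw₀mem (smul_mem_realCone hc (by linarith)))
        rw [pair_eq ℓ hadd hsm, hLw₀, lin_smul ℓ hsm]
        push_cast
        ring
      · apply hnv _ (pair_mem_complexCone hw₀mem hw₀mem)
        rw [pair_eq ℓ hadd hsm, hLw₀, hs]
        simp
      · apply hnv ((s • c : B), ((-γ.re) • c + Complex.normSq α • c' : B))
          (pair_mem_complexCone (smul_mem_realCone hc hs) hw₀mem)
        rw [pair_eq ℓ hadd hsm, hLw₀, lin_smul ℓ hsm]
        linear_combination (s : ℂ) * ℓ (c, 0) * Complex.I_mul_I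
    · simp [hzero]
  · simp [hzero]

lemma conj_mul_re_helper (A₀ B₀ C₀ D₀ : ℝ) (q : ℂ) :
    ((starRingEnd ℂ) (((A₀ : ℂ) + (B₀ : ℂ) * Complex.I) * q) *
      (((C₀ : ℂ) + (D₀ : ℂ) * Complex.I) * q)).re
      = (A₀ * C₀ + B₀ * D₀) * Complex.normSq q := by
  simp [Complex.normSq_apply, Complex.mul_re, Complex.mul_im, map_mul, Complex.conj_re,
    Complex.conj_im, Complex.add_re, Complex.add_im, Complex.ofReal_re, Complex.ofReal_im,
    Complex.I_re, Complex.I_im]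
  ring

lemma decomp (hadd : ∀ p q : B × B, ℓ (p + q) = ℓ p + ℓ q)
    (hsm : ∀ (z : ℂ) (p : B × B), ℓ (cSmul z p) = z * ℓ p)
    (hnv : ∀ h ∈ complexCone S, ℓ h ≠ 0)
    (hsep : ∀ x : B, (∀ ℓ ∈ S, ℓ x = 0) → x = 0)
    {w z : B} (hw : w ∈ realCone S) {α β : ℝ} (hα : 0 < α) (hαβ : α ≤ β)
    (hd : z - α • w ∈ realCone S ∨ z - α • w = 0)
    (hd' : β • w - z ∈ realCone S ∨ β • w - z = 0) :
    ∃ lam mu : ℝ, ℓ (z, 0) = ((lam : ℂ) + (mu : ℂ) * Complex.I) * ℓ (w, 0) ∧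
      α ≤ lam ∧ lam ≤ β ∧ mu ^ 2 ≤ (lam - α) * (β - lam) := by
  set q := ℓ (w, 0) with hq_def
  have hq : q ≠ 0 := ell_ne ℓ hadd hsm hnv hw
  have hnq : 0 < Complex.normSq q := Complex.normSq_pos.mpr hq
  set γ := (starRingEnd ℂ) q * ℓ (z, 0) with hγ_def
  have hconj : (starRingEnd ℂ) q ≠ 0 := by simpa using hq
  have hns : (starRingEnd ℂ) q * q = (Complex.normSq q : ℂ) :=
    (Complex.normSq_eq_conj_mul_self (z := q)).symm
  have hnq' : (Complex.normSq q : ℂ) ≠ 0 := by exact_mod_cast hnq.ne'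
  set lam := γ.re / Complex.normSq q with hlam_def
  set mu := γ.im / Complex.normSq q with hmu_def
  have h_eq : ℓ (z, 0) = ((lam : ℂ) + (mu : ℂ) * Complex.I) * q := by
    apply mul_left_cancel₀ hconj
    have hre : (γ.re : ℂ) + (γ.im : ℂ) * Complex.I = γ := Complex.re_add_im γ
    rw [hlam_def, hmu_def, ← hγ_def]
    push_cast
    field_simp
    linear_combination -((γ.re : ℂ) + (γ.im : ℂ) * Complex.I) * hns - (Complex.normSq q : ℂ) * hre - (Complex.normSq q : ℂ) * hγ_def
  have e1 : (starRingEnd ℂ) q * ℓ (z - α • w, 0) = γ - ((α * Complex.normSq q : ℝ) : ℂ) := by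
    rw [lin_sub ℓ hadd hsm]
    push_cast
    linear_combination (-1 : ℂ) * hγ_def - (α : ℂ) * hns
  have h2 := claim1 ℓ hadd hsm hnv hsep (Or.inl hw) hd
  rw [e1] at h2
  simp only [Complex.sub_re, Complex.ofReal_re] at h2
  have hlam_ge : α ≤ lam := by
    rw [hlam_def, le_div_iff₀ hnq]
    linarith
  have e2 : (starRingEnd ℂ) q * ℓ (β • w - z, 0) = ((β * Complex.normSq q : ℝ) : ℂ) - γ := by
    rw [lin_sub' ℓ hadd hsm]
    push_cast
    linear_combination (β : ℂ) * hns - hγ_def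
  have h3 := claim1 ℓ hadd hsm hnv hsep (Or.inl hw) hd'
  rw [e2] at h3
  simp only [Complex.sub_re, Complex.ofReal_re] at h3
  have hlam_le : lam ≤ β := by
    rw [hlam_def, div_le_iff₀ hnq]
    linarith
  refine ⟨lam, mu, h_eq, hlam_ge, hlam_le, ?_⟩
  have f1 : ℓ (z - α • w, 0) = (((lam - α : ℝ) : ℂ) + (mu : ℂ) * Complex.I) * q := by
    rw [lin_sub ℓ hadd hsm, h_eq]
    push_cast
    ring
  have f2 : ℓ (β • w - z, 0) = (((β - lam : ℝ) : ℂ) + ((-mu : ℝ) : ℂ) * Complex.I) * q := by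
    rw [lin_sub' ℓ hadd hsm, h_eq]
    push_cast
    ring
  have h4 := claim1 ℓ hadd hsm hnv hsep hd hd'
  rw [f1, f2, conj_mul_re_helper] at h4
  nlinarith [h4, hnq]

end ell

lemma mu_lower {α β lam mu : ℝ} (hαβ : α ≤ β) (hlam_ge : α ≤ lam) (hlam_le : lam ≤ β)
    (hmu : mu ^ 2 ≤ (lam - α) * (β - lam)) : -(β - α) / 2 ≤ mu := by
  nlinarith [sq_nonneg (mu + (β - α) / 2), sq_nonneg (2 * lam - α - β)]

lemma twoD {D α β lam mu : ℝ} (hD : 1 ≤ D) (hα : 0 < α) (hαβ : α ≤ β)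
    (hlam_ge : α ≤ lam) (hlam_le : lam ≤ β) (hβD : β ≤ D * α)
    (hmu : mu ^ 2 ≤ (lam - α) * (β - lam)) :
    (1 + α) ^ 2 ≤ 8 * D ^ 2 * (lam ^ 2 + (mu + 1) ^ 2) := by
  have hmu' : -(β - α) / 2 ≤ mu := mu_lower hαβ hlam_ge hlam_le hmu
  have hD2 : 1 ≤ D ^ 2 := by nlinarith
  rcases le_or_gt ((D - 1) * α) 1 with h | h
  · have hmu1 : (1 : ℝ) / 2 ≤ mu + 1 := by nlinarith
    have hl2 : α ^ 2 ≤ lam ^ 2 := by nlinarith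
    have hm2 : ((1 : ℝ) / 2) ^ 2 ≤ (mu + 1) ^ 2 := by nlinarith
    nlinarith [sq_nonneg (7 * α - 1)]
  · have h1 : 1 + α ≤ D * lam := by nlinarith
    nlinarith [sq_nonneg (mu + 1), mul_pos hα (lt_of_lt_of_le hα hlam_ge), sq_nonneg lam]

lemma abs_helper {a b r : ℝ} (hr : 0 ≤ r) (h : a ^ 2 + b ^ 2 ≤ r ^ 2) :
    ‖(a : ℂ) + (b : ℂ) * Complex.I‖ ≤ r := by
  rw [Complex.norm_def, Complex.normSq_add_mul_I]
  have := Real.sqrt_le_sqrt h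
  rwa [Real.sqrt_sq hr] at this

lemma sq_abs_helper (a b : ℝ) :
    ‖(a : ℂ) + (b : ℂ) * Complex.I‖ ^ 2 = a ^ 2 + b ^ 2 := by
  rw [Complex.sq_norm, Complex.normSq_add_mul_I]

lemma key_sq {B₁ B₂ : Type*}
    [NormedAddCommGroup B₁] [NormedSpace ℝ B₁]
    [NormedAddCommGroup B₂] [NormedSpace ℝ B₂]
    (S₁ : Set (B₁ →L[ℝ] ℝ)) (S₂ : Set (B₂ →L[ℝ] ℝ))
    (hsep₂ : ∀ x : B₂, (∀ f ∈ S₂, f x = 0) → x = 0)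
    (m : B₂ →L[ℝ] ℝ) (hmpos : ∀ c ∈ realCone S₂, 0 < m c)
    (A : B₁ →L[ℝ] B₂) (hAcone : ∀ h ∈ realCone S₁, A h ∈ realCone S₂)
    (Δr : ℝ)
    (hdiam : ∀ h ∈ realCone S₁, ∀ g ∈ realCone S₁, ∃ α β : ℝ,
      0 < α ∧ α ≤ β ∧ β ≤ α * Real.exp Δr ∧
      (A g - α • A h ∈ realCone S₂ ∨ A g - α • A h = 0) ∧
      (β • A h - A g ∈ realCone S₂ ∨ β • A h - A g = 0))
    (ℓ : B₂ × B₂ → ℂ)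
    (hadd : ∀ p q : B₂ × B₂, ℓ (p + q) = ℓ p + ℓ q)
    (hsm : ∀ (z : ℂ) (p : B₂ × B₂), ℓ (cSmul z p) = z * ℓ p)
    (hnv : ∀ h ∈ complexCone S₂, ℓ h ≠ 0)
    {x y x' y' : B₁} (hx : x ∈ realCone S₁) (hy : y ∈ realCone S₁)
    (hx' : x' ∈ realCone S₁) (hy' : y' ∈ realCone S₁) :
    ‖ℓ (A x, A y)‖ ^ 2 * (m (A x') + m (A y')) ^ 2 ≤
      8 * Real.exp Δr ^ 6 * (m (A x) + m (A y)) ^ 2 * ‖ℓ (A x', A y')‖ ^ 2 := by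
  set D := Real.exp Δr with hD_def
  have hD0 : 0 < D := Real.exp_pos _
  have hD1 : 1 ≤ D := by
    obtain ⟨α0, β0, hα0, hαβ0, hβD0, -, -⟩ := hdiam x hx x hx
    nlinarith
  have hmge : ∀ {z w : B₂} (α : ℝ), (z - α • w ∈ realCone S₂ ∨ z - α • w = 0) →
      α * m w ≤ m z := by
    intro z w α hd
    have h0 : 0 ≤ m (z - α • w) := by
      rcases hd with h | h
      · exact (hmpos _ h).le
      · rw [h, map_zero]
    rw [map_sub, map_smul, smul_eq_mul] at h0
    linarith
  have hAx := hAcone x hx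
  have hAy := hAcone y hy
  have hAx' := hAcone x' hx'
  have hAy' := hAcone y' hy'
  obtain ⟨α₁, β₁, hα₁, hαβ₁, hβD₁, hd₁, hd₁'⟩ := hdiam x' hx' x hx
  obtain ⟨α₂, β₂, hα₂, hαβ₂, hβD₂, hd₂, hd₂'⟩ := hdiam x' hx' y hy
  obtain ⟨α, β, hα, hαβ, hβD, hd, hd'⟩ := hdiam y' hy' x' hx'
  obtain ⟨lam₁, mu₁, heq₁, hge₁, hle₁, hmu₁⟩ :=
    decomp ℓ hadd hsm hnv hsep₂ hAx' hα₁ hαβ₁ hd₁ hd₁'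
  obtain ⟨lam₂, mu₂, heq₂, hge₂, hle₂, hmu₂⟩ :=
    decomp ℓ hadd hsm hnv hsep₂ hAx' hα₂ hαβ₂ hd₂ hd₂'
  obtain ⟨lam, mu, heq, hge, hle, hmu⟩ :=
    decomp ℓ hadd hsm hnv hsep₂ hAy' hα hαβ hd hd'
  set P' := ℓ (A x', 0) with hP'_def
  set Q' := ℓ (A y', 0) with hQ'_def
  have hP'nn : 0 ≤ ‖P'‖ := norm_nonneg _
  have hQ'nn : 0 ≤ ‖Q'‖ := norm_nonneg _
  have u1 : ‖ℓ (A x, 0)‖ ≤ D * α₁ * ‖P'‖ := by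
    rw [heq₁, norm_mul]
    have h1 : ‖(lam₁ : ℂ) + (mu₁ : ℂ) * Complex.I‖ ≤ β₁ :=
      abs_helper (le_trans hα₁.le hαβ₁) (by nlinarith)
    have h2 : β₁ ≤ D * α₁ := by rw [mul_comm]; exact hβD₁
    exact mul_le_mul (h1.trans h2) le_rfl hP'nn (by positivity)
  have u2 : ‖ℓ (A y, 0)‖ ≤ D * α₂ * ‖P'‖ := by
    rw [heq₂, norm_mul]
    have h1 : ‖(lam₂ : ℂ) + (mu₂ : ℂ) * Complex.I‖ ≤ β₂ :=
      abs_helper (le_trans hα₂.le hαβ₂) (by nlinarith)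
    have h2 : β₂ ≤ D * α₂ := by rw [mul_comm]; exact hβD₂
    exact mul_le_mul (h1.trans h2) le_rfl hP'nn (by positivity)
  have A1 : ‖ℓ (A x, A y)‖ ≤ D * (α₁ + α₂) * ‖P'‖ := by
    rw [pair_eq ℓ hadd hsm]
    calc ‖ℓ (A x, 0) + Complex.I * ℓ (A y, 0)‖
        ≤ ‖ℓ (A x, 0)‖ + ‖Complex.I * ℓ (A y, 0)‖ :=
          norm_add_le _ _
      _ = ‖ℓ (A x, 0)‖ + ‖ℓ (A y, 0)‖ := by
          rw [norm_mul, Complex.norm_I, one_mul]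
      _ ≤ D * α₁ * ‖P'‖ + D * α₂ * ‖P'‖ := add_le_add u1 u2
      _ = D * (α₁ + α₂) * ‖P'‖ := by ring
  have A2 : (α₁ + α₂) * m (A x') ≤ m (A x) + m (A y) := by
    have := hmge α₁ hd₁
    have := hmge α₂ hd₂
    nlinarith
  have A3 : ‖P'‖ ≤ D * α * ‖Q'‖ := by
    rw [heq, norm_mul]
    have h1 : ‖(lam : ℂ) + (mu : ℂ) * Complex.I‖ ≤ β :=
      abs_helper (le_trans hα.le hαβ) (by nlinarith)
    have h2 : β ≤ D * α := by rw [mul_comm]; exact hβD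
    exact mul_le_mul (h1.trans h2) le_rfl hQ'nn (by positivity)
  have A4 : α * (m (A x') + m (A y')) ≤ (1 + α) * m (A x') := by
    have := hmge α hd
    nlinarith
  have A5 : (1 + α) ^ 2 * ‖Q'‖ ^ 2 ≤
      8 * D ^ 2 * ‖ℓ (A x', A y')‖ ^ 2 := by
    have g5 : ℓ (A x', A y') = ((lam : ℂ) + ((mu + 1 : ℝ) : ℂ) * Complex.I) * Q' := by
      rw [pair_eq ℓ hadd hsm, ← hP'_def, ← hQ'_def, heq]
      push_cast
      ring
    have habs : ‖ℓ (A x', A y')‖ ^ 2 =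
        (lam ^ 2 + (mu + 1) ^ 2) * ‖Q'‖ ^ 2 := by
      rw [g5, norm_mul, mul_pow, sq_abs_helper]
    rw [habs]
    have h2d : (1 + α) ^ 2 ≤ 8 * D ^ 2 * (lam ^ 2 + (mu + 1) ^ 2) := by
      have hβD' : β ≤ D * α := by rw [mul_comm]; exact hβD
      exact twoD hD1 hα hαβ hge hle hβD' hmu
    nlinarith [sq_nonneg (‖Q'‖)]
  have hmx' : 0 < m (A x') := hmpos _ hAx'
  have hMu : 0 < m (A x) + m (A y) := by
    have := hmpos _ hAx; have := hmpos _ hAy; linarith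
  have habsu_nn : 0 ≤ ‖ℓ (A x, A y)‖ := norm_nonneg _
  have habsv_nn : 0 ≤ ‖ℓ (A x', A y')‖ := norm_nonneg _
  have hMv : 0 ≤ m (A x') + m (A y') := by
    have := hmpos _ hAx'; have := hmpos _ hAy'; linarith
  have key1 : ‖ℓ (A x, A y)‖ * (α * (m (A x') + m (A y'))) ≤
      D ^ 2 * α * ((m (A x) + m (A y)) * ((1 + α) * ‖Q'‖)) := by
    calc ‖ℓ (A x, A y)‖ * (α * (m (A x') + m (A y')))
        ≤ (D * (α₁ + α₂) * ‖P'‖) * ((1 + α) * m (A x')) := by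
          apply mul_le_mul A1 A4 (by positivity) (by positivity)
      _ ≤ (D * (α₁ + α₂) * (D * α * ‖Q'‖)) * ((1 + α) * m (A x')) := by
          apply mul_le_mul_of_nonneg_right _ (by positivity)
          apply mul_le_mul_of_nonneg_left A3 (by positivity)
      _ = (D * D * α * ((1 + α) * ‖Q'‖)) * ((α₁ + α₂) * m (A x')) := by ring
      _ ≤ (D * D * α * ((1 + α) * ‖Q'‖)) * (m (A x) + m (A y)) := by
          apply mul_le_mul_of_nonneg_left A2 (by positivity)
      _ = D ^ 2 * α * ((m (A x) + m (A y)) * ((1 + α) * ‖Q'‖)) := by ring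
  have key2 : ‖ℓ (A x, A y)‖ * (m (A x') + m (A y')) ≤
      D ^ 2 * ((m (A x) + m (A y)) * ((1 + α) * ‖Q'‖)) := by
    nlinarith [key1]
  calc ‖ℓ (A x, A y)‖ ^ 2 * (m (A x') + m (A y')) ^ 2
      = (‖ℓ (A x, A y)‖ * (m (A x') + m (A y'))) ^ 2 := by ring
    _ ≤ (D ^ 2 * ((m (A x) + m (A y)) * ((1 + α) * ‖Q'‖))) ^ 2 := by
        apply pow_le_pow_left₀ (by positivity) key2 2
    _ = D ^ 4 * (m (A x) + m (A y)) ^ 2 * ((1 + α) ^ 2 * ‖Q'‖ ^ 2) := by ring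
    _ ≤ D ^ 4 * (m (A x) + m (A y)) ^ 2 * (8 * D ^ 2 * ‖ℓ (A x', A y')‖ ^ 2) := by
        apply mul_le_mul_of_nonneg_left A5 (by positivity)
    _ = 8 * D ^ 6 * (m (A x) + m (A y)) ^ 2 * ‖ℓ (A x', A y')‖ ^ 2 := by ring

end AuxiliaryLemmas

/-- **Lemma 5.17 (real diameter controls the complex diameter).** If a bounded linear
operator `A` maps `𝒞_{1,ℝ}` into `𝒞_{2,ℝ}` with `d_H`-diameter of the image at most
`Δ_ℝ < ∞`, then its complexification maps `𝒞_{1,ℂ}` into `𝒞_{2,ℂ}` and the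
`δ_{𝒞_{2,ℂ}}`-diameter of the image is at most `8Δ_ℝ + 2 ln(3√2 κ⁻²)`. -/
theorem real_diameter_controls_complex_diameter {B₁ B₂ : Type*}
    [NormedAddCommGroup B₁] [NormedSpace ℝ B₁] [CompleteSpace B₁]
    [NormedAddCommGroup B₂] [NormedSpace ℝ B₂] [CompleteSpace B₂]
    (st₁ : Setup B₁) (st₂ : Setup B₂)
    (A : B₁ →L[ℝ] B₂)
    (hAcone : ∀ h ∈ realCone st₁.S, A h ∈ realCone st₂.S)
    (Δr : ℝ)
    -- the image of the real cone has `d_H`-diameter at most `Δ_ℝ`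
    (hdiam : ∀ h ∈ realCone st₁.S, ∀ g ∈ realCone st₁.S, ∃ α β : ℝ,
      0 < α ∧ α ≤ β ∧ β ≤ α * Real.exp Δr ∧
      (A g - α • A h ∈ realCone st₂.S ∨ A g - α • A h = 0) ∧
      (β • A h - A g ∈ realCone st₂.S ∨ β • A h - A g = 0)) :
    (∀ p ∈ complexCone st₁.S, (A p.1, A p.2) ∈ complexCone st₂.S) ∧
    (∀ p ∈ complexCone st₁.S, ∀ q ∈ complexCone st₁.S,
      deltaGauge st₂.S (A p.1, A p.2) (A q.1, A q.2) ≤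
        ENNReal.ofReal (8 * Δr + 2 * Real.log (3 * Real.sqrt 2 / st₂.κ ^ 2))) := by
  have hsep₂ := st₂.separating
  have hmpos : ∀ c ∈ realCone st₂.S, 0 < st₂.mm c := by
    intro c hc
    have h1 : 0 < st₂.κ * ‖c‖ := mul_pos st₂.κ_pos (norm_pos_iff.mpr hc.1)
    exact lt_of_lt_of_le h1 (st₂.mm_lower c hc)
  have himg : ∀ (z : ℂ) (x y : B₁),
      ((A (cSmul z (x, y)).1, A (cSmul z (x, y)).2) : B₂ × B₂) = cSmul z (A x, A y) := by
    intro z x y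
    simp [cSmul, map_sub, map_add, map_smul]
  constructor
  · rintro p ⟨z, hz, x, hx, y, hy, rfl⟩
    exact ⟨z, hz, A x, hAcone x hx, A y, hAcone y hy, himg z x y⟩
  · rintro p ⟨zp, hzp, xp, hxp, yp, hyp, rfl⟩ q ⟨zq, hzq, xq, hxq, yq, hyq, rfl⟩
    rw [himg zp xp yp, himg zq xq yq]
    -- the diameter is nonnegative and exp bound
    set D := Real.exp Δr with hD_def
    have hD0 : 0 < D := Real.exp_pos _
    have hD1 : 1 ≤ D := by
      obtain ⟨α0, β0, hα0, hαβ0, hβD0, -, -⟩ := hdiam xp hxp xp hxp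
      nlinarith
    have hΔ : 0 ≤ Δr := by
      rw [hD_def] at hD1
      exact Real.one_le_exp_iff.mp hD1
    have hκ2 : 0 < st₂.κ ^ 2 := pow_pos st₂.κ_pos 2
    have hsqrt2 : 0 < Real.sqrt 2 := Real.sqrt_pos.mpr (by norm_num)
    set t := 3 * Real.sqrt 2 / st₂.κ ^ 2 with ht_def
    have ht0 : 0 < t := by positivity
    have ht : 3 * Real.sqrt 2 ≤ t := by
      rw [ht_def, le_div_iff₀ hκ2]
      have hκ1 : st₂.κ ^ 2 ≤ 1 := by nlinarith [st₂.κ_pos, st₂.κ_lt_one]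
      nlinarith
    have ht2 : (18 : ℝ) ≤ t ^ 2 := by
      have h2 : Real.sqrt 2 ^ 2 = 2 := Real.sq_sqrt (by norm_num)
      nlinarith
    unfold deltaGauge
    refine iSup₂_le fun z hz => iSup₂_le fun w hw => ?_
    obtain ⟨ℓ, hℓ, rfl⟩ := hz
    obtain ⟨ℓ', hℓ', rfl⟩ := hw
    obtain ⟨haddℓ, hsmℓ, -⟩ := hℓ.1
    have hnvℓ := hℓ.2
    obtain ⟨haddℓ', hsmℓ', -⟩ := hℓ'.1
    have hnvℓ' := hℓ'.2
    have hAu : ((A xp, A yp) : B₂ × B₂) ∈ complexCone st₂.S :=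
      pair_mem_complexCone (hAcone xp hxp) (hAcone yp hyp)
    have hAv : ((A xq, A yq) : B₂ × B₂) ∈ complexCone st₂.S :=
      pair_mem_complexCone (hAcone xq hxq) (hAcone yq hyq)
    have hu : ℓ (A xp, A yp) ≠ 0 := hnvℓ _ hAu
    have hv : ℓ (A xq, A yq) ≠ 0 := hnvℓ _ hAv
    have hu' : ℓ' (A xp, A yp) ≠ 0 := hnvℓ' _ hAu
    have hv' : ℓ' (A xq, A yq) ≠ 0 := hnvℓ' _ hAv
    set au := ‖ℓ (A xp, A yp)‖ with hau_def
    set av := ‖ℓ (A xq, A yq)‖ with hav_def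
    set bu := ‖ℓ' (A xp, A yp)‖ with hbu_def
    set bv := ‖ℓ' (A xq, A yq)‖ with hbv_def
    have hau0 : 0 < au := norm_pos_iff.mpr hu
    have hav0 : 0 < av := norm_pos_iff.mpr hv
    have hbu0 : 0 < bu := norm_pos_iff.mpr hu'
    have hbv0 : 0 < bv := norm_pos_iff.mpr hv'
    set Mu := st₂.mm (A xp) + st₂.mm (A yp) with hMu_def
    set Mv := st₂.mm (A xq) + st₂.mm (A yq) with hMv_def
    have hMu0 : 0 < Mu := by
      have := hmpos _ (hAcone xp hxp); have := hmpos _ (hAcone yp hyp)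
      rw [hMu_def]; linarith
    have hMv0 : 0 < Mv := by
      have := hmpos _ (hAcone xq hxq); have := hmpos _ (hAcone yq hyq)
      rw [hMv_def]; linarith
    have K1 := key_sq st₁.S st₂.S hsep₂ st₂.mm hmpos A hAcone Δr hdiam ℓ
      haddℓ hsmℓ hnvℓ hxp hyp hxq hyq
    have K2 := key_sq st₁.S st₂.S hsep₂ st₂.mm hmpos A hAcone Δr hdiam ℓ'
      haddℓ' hsmℓ' hnvℓ' hxq hyq hxp hyp
    rw [← hau_def, ← hav_def, ← hMu_def, ← hMv_def, ← hD_def] at K1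
    rw [← hbu_def, ← hbv_def, ← hMu_def, ← hMv_def, ← hD_def] at K2
    -- multiply and cancel
    have h12 : (au * bv) ^ 2 * (Mu * Mv) ^ 2 ≤ (8 * D ^ 6 * (av * bu)) ^ 2 * (Mu * Mv) ^ 2 := by
      calc (au * bv) ^ 2 * (Mu * Mv) ^ 2 = (au ^ 2 * Mv ^ 2) * (bv ^ 2 * Mu ^ 2) := by ring
        _ ≤ (8 * D ^ 6 * Mu ^ 2 * av ^ 2) * (8 * D ^ 6 * Mv ^ 2 * bu ^ 2) :=
            mul_le_mul K1 K2 (by positivity) (by positivity)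
        _ = (8 * D ^ 6 * (av * bu)) ^ 2 * (Mu * Mv) ^ 2 := by ring
    have hMuMv : (0 : ℝ) < (Mu * Mv) ^ 2 := by positivity
    have hcancel : (au * bv) ^ 2 ≤ (8 * D ^ 6 * (av * bu)) ^ 2 :=
      le_of_mul_le_mul_right h12 hMuMv
    have h14 : au * bv ≤ 8 * D ^ 6 * (av * bu) := by
      have hs := Real.sqrt_le_sqrt hcancel
      rwa [Real.sqrt_sq (by positivity), Real.sqrt_sq (by positivity)] at hs
    -- compute the norms
    have hzval : ‖ℓ (cSmul zp (A xp, A yp)) / ℓ (cSmul zq (A xq, A yq))‖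
        = (‖zp‖ * au) / (‖zq‖ * av) := by
      rw [hsmℓ, hsmℓ, norm_div, norm_mul, norm_mul, hau_def, hav_def]
    have hwval : ‖ℓ' (cSmul zp (A xp, A yp)) / ℓ' (cSmul zq (A xq, A yq))‖
        = (‖zp‖ * bu) / (‖zq‖ * bv) := by
      rw [hsmℓ', hsmℓ', norm_div, norm_mul, norm_mul, hbu_def, hbv_def]
    have hzp0 : 0 < ‖zp‖ := norm_pos_iff.mpr hzp
    have hzq0 : 0 < ‖zq‖ := norm_pos_iff.mpr hzq
    have hwpos : 0 < (‖zp‖ * bu) / (‖zq‖ * bv) := by positivity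
    have hzpos : 0 < (‖zp‖ * au) / (‖zq‖ * av) := by positivity
    have hratio : (‖zp‖ * au) / (‖zq‖ * av) / ((‖zp‖ * bu) / (‖zq‖ * bv)) ≤ 8 * D ^ 6 := by
      have e : (‖zp‖ * au) / (‖zq‖ * av) / ((‖zp‖ * bu) / (‖zq‖ * bv))
          = (au * bv) / (av * bu) := by
        have hazp : ‖zp‖ ≠ 0 := (norm_pos_iff.mpr hzp).ne'
        have hazq : ‖zq‖ ≠ 0 := (norm_pos_iff.mpr hzq).ne'
        field_simp [hazp, hazq, hav0.ne', hbu0.ne', hbv0.ne']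
      rw [e, div_le_iff₀ (by positivity)]
      linarith [h14]
    rw [hzval, hwval]
    apply ENNReal.ofReal_le_ofReal
    have hlog1 : Real.log ((‖zp‖ * au) / (‖zq‖ * av) / ((‖zp‖ * bu) / (‖zq‖ * bv)))
        ≤ Real.log (8 * D ^ 6) := by
      apply (Real.log_le_log_iff (by positivity) (by positivity)).mpr hratio
    have hlog2 : Real.log (8 * D ^ 6) = Real.log 8 + 6 * Δr := by
      rw [Real.log_mul (by norm_num) (by positivity), Real.log_pow, hD_def, Real.log_exp]
      push_cast
      ring
    have hlog3 : Real.log 8 ≤ 2 * Real.log t := by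
      have e1 : (2 : ℝ) * Real.log t = Real.log (t ^ 2) := by
        rw [Real.log_pow]; push_cast; ring
      rw [e1]
      apply (Real.log_le_log_iff (by norm_num) (by positivity)).mpr
      linarith
    linarith


end ConeSetup
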